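/- Let b > 0 and d, n positive integers. Let θ ∈ [−b,b]ⁿ and M an n×n symmetric matrix with M_{i,i} = 0 for all i, |M_{i,j}| ≤ b for all i, j, and each row of M having at most d nonzero entries. Let X ∼ I_{(M,θ)}. Then: (1) for every v ∈ [n], every s ∈ {−1,1}, and every x ∈ {−1,1}ⁿ, P[X_v = s | X_{−v} = x_{−v}] ≥ e^{−2b−2bd}/2; and (2) for every subset T ⊆ [n] and every x ∈ {−1,1}ⁿ, P[X_T = x_T] ≥ e^{−2b(1+d)|T|}·2^{−|T|}. -/

import Mathlib

open Finset Real
open scoped Classical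

noncomputable section

/-- The real spin value (`±1`) of a Boolean configuration entry. -/
def spin (s : Bool) : ℝ := if s then 1 else -1

/-- The unnormalized Ising weight `exp(θ·x + ½ x·Mx)` of a configuration. -/
def isingWt {n : ℕ} (M : Matrix (Fin n) (Fin n) ℝ) (θ : Fin n → ℝ) (σ : Fin n → Bool) : ℝ :=
  Real.exp ((∑ i, θ i * spin (σ i)) + (1 / 2) * ∑ i, ∑ j, spin (σ i) * M i j * spin (σ j))

/-- The Ising probability of a single configuration. -/
def isingProb {n : ℕ} (M : Matrix (Fin n) (Fin n) ℝ) (θ : Fin n → ℝ) (σ : Fin n → Bool) : ℝ :=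
  isingWt M θ σ / ∑ τ : Fin n → Bool, isingWt M θ τ

/-- The Ising probability of an event `A`. -/
def isingPr {n : ℕ} (M : Matrix (Fin n) (Fin n) ℝ) (θ : Fin n → ℝ)
    (A : (Fin n → Bool) → Prop) : ℝ :=
  ∑ σ ∈ Finset.univ.filter (fun σ => A σ), isingProb M θ σ

/-- The Ising conditional probability `P[A | B]`. -/
def isingCond {n : ℕ} (M : Matrix (Fin n) (Fin n) ℝ) (θ : Fin n → ℝ)
    (A B : (Fin n → Bool) → Prop) : ℝ :=
  isingPr M θ (fun σ => A σ ∧ B σ) / isingPr M θ B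

lemma spin_abs (s : Bool) : |spin s| = 1 := by cases s <;> simp [spin]

lemma isingWt_pos {n : ℕ} (M : Matrix (Fin n) (Fin n) ℝ) (θ : Fin n → ℝ) (σ : Fin n → Bool) :
    0 < isingWt M θ σ := Real.exp_pos _

lemma wt_update_ge {n : ℕ} (b : ℝ) (d : ℕ)
    (θ : Fin n → ℝ) (hθ : ∀ i, |θ i| ≤ b)
    (M : Matrix (Fin n) (Fin n) ℝ)
    (hsymm : M.IsSymm) (hdiag : ∀ i, M i i = 0)
    (hbound : ∀ i j, |M i j| ≤ b)
    (hsparse : ∀ i, (Finset.univ.filter (fun j => M i j ≠ 0)).card ≤ d)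
    (hb : 0 ≤ b)
    (v : Fin n) (s : Bool) (σ : Fin n → Bool) :
    Real.exp (-(2*b + 2*b*d)) * isingWt M θ σ ≤ isingWt M θ (Function.update σ v s) := by
  set τ := Function.update σ v s with hτdef
  set Δ : ℝ := spin s - spin (σ v) with hΔ
  have hτ : ∀ i, spin (τ i) = spin (σ i) + (if i = v then Δ else 0) := by
    intro i
    by_cases h : i = v
    · subst h; simp [hτdef, hΔ]
    · simp [hτdef, Function.update_of_ne h, h]
  have hlin : ∑ i, θ i * spin (τ i) = (∑ i, θ i * spin (σ i)) + θ v * Δ := by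
    simp only [hτ, mul_add, Finset.sum_add_distrib, mul_ite, mul_zero]
    rw [Finset.sum_ite_eq' Finset.univ v (fun i => θ i * Δ)]
    simp
  have hquad : ∑ i, ∑ j, spin (τ i) * M i j * spin (τ j)
      = (∑ i, ∑ j, spin (σ i) * M i j * spin (σ j)) + 2 * Δ * ∑ j, M v j * spin (σ j) := by
    have expand : ∀ i j, spin (τ i) * M i j * spin (τ j)
        = spin (σ i) * M i j * spin (σ j)
          + ((if i = v then Δ * (M i j * spin (σ j)) else 0)
          + ((if j = v then (spin (σ i) * M i j) * Δ else 0)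
          + (if i = v then (if j = v then Δ * M i j * Δ else 0) else 0))) := by
      intro i j
      rw [hτ i, hτ j]
      by_cases hi : i = v <;> by_cases hj : j = v <;> simp [hi, hj] <;> ring
    simp only [expand, Finset.sum_add_distrib]
    have s2 : ∑ i : Fin n, ∑ j, (if i = v then Δ * (M i j * spin (σ j)) else 0)
        = Δ * ∑ j, M v j * spin (σ j) := by
      rw [Finset.sum_eq_single v]
      · simp [Finset.mul_sum]
      · intro i _ hi; simp [hi]
      · simp
    have s3 : ∑ i : Fin n, ∑ j, (if j = v then (spin (σ i) * M i j) * Δ else 0)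
        = Δ * ∑ j, M v j * spin (σ j) := by
      have : ∀ i : Fin n, (∑ j, if j = v then (spin (σ i) * M i j) * Δ else 0)
          = (spin (σ i) * M i v) * Δ := by
        intro i
        rw [Finset.sum_ite_eq' Finset.univ v (fun j => (spin (σ i) * M i j) * Δ)]
        simp
      simp only [this]
      rw [Finset.mul_sum]
      apply Finset.sum_congr rfl
      intro i _
      have := hsymm.apply i v
      -- hsymm.apply : M v i = M i v ??? check direction
      rw [← this]; ring
    have s4 : ∑ i : Fin n, ∑ j, (if i = v then (if j = v then Δ * M i j * Δ else 0) else 0)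
        = 0 := by
      rw [Finset.sum_eq_single v]
      · simp [Finset.sum_ite_eq', hdiag]
      · intro i _ hi; simp [hi]
      · simp
    rw [s2, s3, s4]
    ring
  -- bound the interaction sum
  have hS : |∑ j, M v j * spin (σ j)| ≤ b * d := by
    calc |∑ j, M v j * spin (σ j)| ≤ ∑ j, |M v j * spin (σ j)| :=
          Finset.abs_sum_le_sum_abs _ _
      _ = ∑ j, |M v j| := by simp [abs_mul, spin_abs]
      _ = ∑ j ∈ Finset.univ.filter (fun j => M v j ≠ 0), |M v j| := by
          rw [Finset.sum_filter_of_ne]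
          intro j _ hj
          simpa using hj
      _ ≤ (Finset.univ.filter (fun j => M v j ≠ 0)).card • b :=
          Finset.sum_le_card_nsmul _ _ b (fun j _ => hbound v j)
      _ ≤ b * d := by
          rw [nsmul_eq_mul]
          calc ((Finset.univ.filter (fun j => M v j ≠ 0)).card : ℝ) * b ≤ (d : ℝ) * b := by
                apply mul_le_mul_of_nonneg_right _ hb
                exact_mod_cast hsparse v
            _ = b * d := by ring
  have hΔabs : |Δ| ≤ 2 := by
    calc |Δ| ≤ |spin s| + |spin (σ v)| := abs_sub _ _
      _ = 2 := by rw [spin_abs, spin_abs]; norm_num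
  have hD : |Δ * (θ v + ∑ j, M v j * spin (σ j))| ≤ 2*b + 2*b*d := by
    rw [abs_mul]
    calc |Δ| * |θ v + ∑ j, M v j * spin (σ j)| ≤ 2 * (b + b * d) := by
          apply mul_le_mul hΔabs _ (abs_nonneg _) (by norm_num)
          calc |θ v + ∑ j, M v j * spin (σ j)| ≤ |θ v| + |∑ j, M v j * spin (σ j)| :=
                abs_add_le _ _
            _ ≤ b + b * d := add_le_add (hθ v) hS
      _ = 2*b + 2*b*d := by ring
  have harg : (∑ i, θ i * spin (τ i)) + (1/2) * ∑ i, ∑ j, spin (τ i) * M i j * spin (τ j)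
      = ((∑ i, θ i * spin (σ i)) + (1/2) * ∑ i, ∑ j, spin (σ i) * M i j * spin (σ j))
        + Δ * (θ v + ∑ j, M v j * spin (σ j)) := by
    rw [hlin, hquad]; ring
  unfold isingWt
  rw [harg, ← Real.exp_add]
  exact Real.exp_le_exp.mpr (by linarith [(abs_le.mp hD).1])

lemma key_sum {n : ℕ} (b : ℝ) (d : ℕ)
    (θ : Fin n → ℝ) (hθ : ∀ i, |θ i| ≤ b)
    (M : Matrix (Fin n) (Fin n) ℝ)
    (hsymm : M.IsSymm) (hdiag : ∀ i, M i i = 0)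
    (hbound : ∀ i j, |M i j| ≤ b)
    (hsparse : ∀ i, (Finset.univ.filter (fun j => M i j ≠ 0)).card ≤ d)
    (hb : 0 ≤ b)
    (v : Fin n) (s : Bool) (C : (Fin n → Bool) → Prop)
    (hC : ∀ σ w, C σ → C (Function.update σ v w)) :
    Real.exp (-(2*b + 2*b*d)) / 2 * ∑ σ ∈ Finset.univ.filter (fun σ => C σ), isingWt M θ σ
      ≤ ∑ σ ∈ Finset.univ.filter (fun σ => σ v = s ∧ C σ), isingWt M θ σ := by
  set c := 2*b + 2*b*(d:ℝ) with hc
  have hc0 : 0 ≤ c := by positivity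
  set A := Finset.univ.filter (fun σ : Fin n → Bool => σ v = s ∧ C σ) with hA
  set B := Finset.univ.filter (fun σ : Fin n → Bool => ¬ σ v = s ∧ C σ) with hB
  have hsplit : ∑ σ ∈ Finset.univ.filter (fun σ => C σ), isingWt M θ σ
      = ∑ σ ∈ A, isingWt M θ σ + ∑ σ ∈ B, isingWt M θ σ := by
    rw [hA, hB,
      ← Finset.sum_filter_add_sum_filter_not (Finset.univ.filter fun σ => C σ)
        (fun σ => σ v = s)]
    congr 1 <;> · rw [Finset.filter_filter]; congr 1; apply Finset.filter_congr
                  intro σ _; constructor <;> (intro h; exact ⟨h.2, h.1⟩)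
  have hBbound : ∑ σ ∈ B, isingWt M θ σ ≤ Real.exp c * ∑ σ ∈ A, isingWt M θ σ := by
    have step1 : ∀ σ ∈ B, isingWt M θ σ ≤ Real.exp c * isingWt M θ (Function.update σ v s) := by
      intro σ _
      have h := wt_update_ge b d θ hθ M hsymm hdiag hbound hsparse hb v s σ
      calc isingWt M θ σ = Real.exp c * (Real.exp (-c) * isingWt M θ σ) := by
            rw [← mul_assoc, ← Real.exp_add]; simp
        _ ≤ Real.exp c * isingWt M θ (Function.update σ v s) :=
            mul_le_mul_of_nonneg_left h (Real.exp_pos _).le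
    calc ∑ σ ∈ B, isingWt M θ σ
        ≤ ∑ σ ∈ B, Real.exp c * isingWt M θ (Function.update σ v s) :=
          Finset.sum_le_sum step1
      _ = Real.exp c * ∑ σ ∈ B, isingWt M θ (Function.update σ v s) := by
          rw [Finset.mul_sum]
      _ ≤ Real.exp c * ∑ σ ∈ A, isingWt M θ σ := by
          apply mul_le_mul_of_nonneg_left _ (Real.exp_pos _).le
          have hinj : ∀ x ∈ B, ∀ y ∈ B, Function.update x v s = Function.update y v s → x = y := by
            intro x hx y hy h
            simp only [hB, Finset.mem_filter] at hx hy
            funext w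
            by_cases hw : w = v
            · subst hw
              have hx' := hx.2.1; have hy' := hy.2.1
              cases s <;> simp_all
            · have := congrFun h w
              simpa [Function.update_of_ne hw] using this
          rw [← Finset.sum_image hinj]
          apply Finset.sum_le_sum_of_subset_of_nonneg
          · intro τ hτ
            simp only [Finset.mem_image] at hτ
            obtain ⟨σ, hσ, rfl⟩ := hτ
            simp only [hB, Finset.mem_filter] at hσ
            simp only [hA, Finset.mem_filter]
            refine ⟨Finset.mem_univ _, by simp, hC σ s hσ.2.2⟩
          · intro τ _ _; exact (isingWt_pos M θ τ).le
  have hZA : 0 ≤ ∑ σ ∈ A, isingWt M θ σ :=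
    Finset.sum_nonneg fun σ _ => (isingWt_pos M θ σ).le
  have hexp : Real.exp (-c) * Real.exp c = 1 := by rw [← Real.exp_add]; simp
  have h2 : Real.exp (-c) * ∑ σ ∈ B, isingWt M θ σ ≤ ∑ σ ∈ A, isingWt M θ σ := by
    calc Real.exp (-c) * ∑ σ ∈ B, isingWt M θ σ
        ≤ Real.exp (-c) * (Real.exp c * ∑ σ ∈ A, isingWt M θ σ) :=
          mul_le_mul_of_nonneg_left hBbound (Real.exp_pos _).le
      _ = ∑ σ ∈ A, isingWt M θ σ := by rw [← mul_assoc, hexp, one_mul]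
  have h3 : Real.exp (-c) * ∑ σ ∈ A, isingWt M θ σ ≤ ∑ σ ∈ A, isingWt M θ σ :=
    mul_le_of_le_one_left hZA (Real.exp_le_one_iff.mpr (neg_nonpos.mpr hc0))
  rw [hsplit]
  nlinarith [h2, h3]

lemma key_pr {n : ℕ} (b : ℝ) (d : ℕ)
    (θ : Fin n → ℝ) (hθ : ∀ i, |θ i| ≤ b)
    (M : Matrix (Fin n) (Fin n) ℝ)
    (hsymm : M.IsSymm) (hdiag : ∀ i, M i i = 0)
    (hbound : ∀ i j, |M i j| ≤ b)
    (hsparse : ∀ i, (Finset.univ.filter (fun j => M i j ≠ 0)).card ≤ d)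
    (hb : 0 ≤ b)
    (v : Fin n) (s : Bool) (C : (Fin n → Bool) → Prop)
    (hC : ∀ σ w, C σ → C (Function.update σ v w)) :
    Real.exp (-(2*b + 2*b*d)) / 2 * isingPr M θ C
      ≤ isingPr M θ (fun σ => σ v = s ∧ C σ) := by
  have hZ : 0 < ∑ τ : Fin n → Bool, isingWt M θ τ :=
    Finset.sum_pos (fun τ _ => isingWt_pos M θ τ) Finset.univ_nonempty
  unfold isingPr isingProb
  rw [← Finset.sum_div, ← Finset.sum_div, ← mul_div_assoc]
  refine (div_le_div_iff_of_pos_right hZ).mpr ?_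
  have h := key_sum b d θ hθ M hsymm hdiag hbound hsparse hb v s C hC
  convert h using 3
  exact rfl

lemma isingPr_pos {n : ℕ} (M : Matrix (Fin n) (Fin n) ℝ) (θ : Fin n → ℝ)
    (C : (Fin n → Bool) → Prop) (σ₀ : Fin n → Bool) (h₀ : C σ₀) :
    0 < isingPr M θ C := by
  have hZ : 0 < ∑ τ : Fin n → Bool, isingWt M θ τ :=
    Finset.sum_pos (fun τ _ => isingWt_pos M θ τ) Finset.univ_nonempty
  unfold isingPr isingProb
  rw [← Finset.sum_div]
  apply div_pos _ hZ
  apply Finset.sum_pos (fun σ _ => isingWt_pos M θ σ)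
  exact ⟨σ₀, Finset.mem_filter.mpr ⟨Finset.mem_univ _, h₀⟩⟩

/-- For a bounded-degree bounded-weight Ising model: (1) each conditional
probability `P[X_v = s | X_{-v} = x_{-v}]` is at least `e^{-2b-2bd}/2`, and (2) the probability
of any partial assignment on a set `T` is at least `e^{-2b(1+d)|T|} 2^{-|T|}`. -/
theorem stmt17 {n : ℕ} (b : ℝ) (d : ℕ) (hb : 0 < b) (hd : 0 < d) (hn : 0 < n)
    (θ : Fin n → ℝ) (hθ : ∀ i, |θ i| ≤ b)
    (M : Matrix (Fin n) (Fin n) ℝ)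
    (hsymm : M.IsSymm) (hdiag : ∀ i, M i i = 0)
    (hbound : ∀ i j, |M i j| ≤ b)
    (hsparse : ∀ i, (Finset.univ.filter (fun j => M i j ≠ 0)).card ≤ d) :
    (∀ (v : Fin n) (s : Bool) (x : Fin n → Bool),
      Real.exp (-2 * b - 2 * b * d) / 2 ≤
        isingCond M θ (fun σ => σ v = s) (fun σ => ∀ w, w ≠ v → σ w = x w)) ∧
    (∀ (T : Finset (Fin n)) (x : Fin n → Bool),
      Real.exp (-2 * b * (1 + d) * T.card) * ((2 : ℝ) ^ (T.card : ℕ))⁻¹ ≤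
        isingPr M θ (fun σ => ∀ w ∈ T, σ w = x w)) := by
  have hb' : 0 ≤ b := hb.le
  have hceq : -2 * b - 2 * b * (d:ℝ) = -(2*b + 2*b*(d:ℝ)) := by ring
  have hZ : 0 < ∑ τ : Fin n → Bool, isingWt M θ τ :=
    Finset.sum_pos (fun τ _ => isingWt_pos M θ τ) Finset.univ_nonempty
  constructor
  · intro v s x
    set C : (Fin n → Bool) → Prop := fun σ => ∀ w, w ≠ v → σ w = x w with hCdef
    have hC : ∀ σ w, C σ → C (Function.update σ v w) := by
      intro σ w h w' hw'
      rw [Function.update_of_ne hw']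
      exact h w' hw'
    have hkey := key_pr b d θ hθ M hsymm hdiag hbound hsparse hb' v s C hC
    have hPB : 0 < isingPr M θ C :=
      isingPr_pos M θ C x (fun w _ => rfl)
    rw [hceq]
    unfold isingCond
    rw [le_div_iff₀ hPB]
    exact hkey
  · intro T x
    induction T using Finset.induction_on with
    | empty =>
        have : isingPr M θ (fun σ => ∀ w ∈ (∅ : Finset (Fin n)), σ w = x w) = 1 := by
          unfold isingPr isingProb
          rw [← Finset.sum_div, div_eq_one_iff_eq hZ.ne']
          apply Finset.sum_congr _ (fun _ _ => rfl)
          ext σ; simp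
        rw [this]
        simp
    | @insert v S hv ih =>
        set C : (Fin n → Bool) → Prop := fun σ => ∀ w ∈ S, σ w = x w with hCdef
        have hC : ∀ σ w, C σ → C (Function.update σ v w) := by
          intro σ w h w' hw'
          rw [Function.update_of_ne (by rintro rfl; exact hv hw')]
          exact h w' hw'
        have hkey := key_pr b d θ hθ M hsymm hdiag hbound hsparse hb' v (x v) C hC
        have hevent : isingPr M θ (fun σ => ∀ w ∈ insert v S, σ w = x w)
            = isingPr M θ (fun σ => σ v = x v ∧ C σ) := by
          unfold isingPr
          apply Finset.sum_congr _ (fun _ _ => rfl)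
          ext σ; simp [hCdef, Finset.forall_mem_insert]
        rw [hevent, Finset.card_insert_of_notMem hv]
        have harith : Real.exp (-2 * b * (1 + (d:ℝ)) * ((S.card + 1 : ℕ):ℝ))
              * ((2:ℝ) ^ (S.card + 1))⁻¹
            = Real.exp (-(2*b + 2*b*(d:ℝ))) / 2
              * (Real.exp (-2 * b * (1 + (d:ℝ)) * ((S.card : ℕ):ℝ)) * ((2:ℝ) ^ S.card)⁻¹) := by
          have e1 : -2 * b * (1 + (d:ℝ)) * ((S.card + 1 : ℕ):ℝ)
              = (-(2*b + 2*b*(d:ℝ))) + -2 * b * (1 + (d:ℝ)) * ((S.card : ℕ):ℝ) := by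
            push_cast; ring
          rw [e1, Real.exp_add, pow_succ, mul_inv]
          ring
        rw [harith]
        calc Real.exp (-(2*b + 2*b*(d:ℝ))) / 2
              * (Real.exp (-2 * b * (1 + (d:ℝ)) * ((S.card : ℕ):ℝ)) * ((2:ℝ) ^ S.card)⁻¹)
            ≤ Real.exp (-(2*b + 2*b*(d:ℝ))) / 2 * isingPr M θ C :=
              mul_le_mul_of_nonneg_left ih (by positivity)
          _ ≤ isingPr M θ (fun σ => σ v = x v ∧ C σ) := hkey
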